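/- Let x_0 be a random vector in ℝ^n distributed as a Gaussian mixture with components (p_i, μ_i^0, Σ_i^0), i = 0,…,r−1, where all Σ_i^0 are positive definite and p_i > 0. Suppose that, conditioned on x_0 being drawn from component i, the terminal state is x_N = H_{i,j} x_0 − h_{i,j} with probability λ_{i,j} (where ∑_j λ_{i,j} = 1, λ_{i,j} ≥ 0, and each H_{i,j} is invertible), and suppose that for every i the parameters satisfy H_{i,j} μ_i^0 − h_{i,j} = μ_j^f and H_{i,j} Σ_i^0 H_{i,j}ᵀ = Σ_j^f for all j. Then x_N is distributed as a Gaussian mixture with components (q_j, μ_j^f, Σ_j^f), j = 0,…,t−1, where q_j = ∑_{i=0}^{r−1} p_i λ_{i,j}. -/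

import Mathlib

open Matrix MeasureTheory

noncomputable def gaussianPdf (n : ℕ) (μ : Fin n → ℝ) (S : Matrix (Fin n) (Fin n) ℝ)
    (x : Fin n → ℝ) : ℝ :=
  (2 * Real.pi) ^ (-(n : ℝ) / 2) * S.det ^ (-(1 : ℝ) / 2) *
    Real.exp (-(1 / 2) * ((x - μ) ⬝ᵥ S⁻¹.mulVec (x - μ)))

lemma gaussianPdf_nonneg (n : ℕ) (μ : Fin n → ℝ) (S : Matrix (Fin n) (Fin n) ℝ)
    (hS : 0 ≤ S.det) (x : Fin n → ℝ) : 0 ≤ gaussianPdf n μ S x := by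
  unfold gaussianPdf; positivity

lemma gaussianPdf_continuous (n : ℕ) (μ : Fin n → ℝ) (S : Matrix (Fin n) (Fin n) ℝ) :
    Continuous (gaussianPdf n μ S) := by
  unfold gaussianPdf
  apply Continuous.mul continuous_const
  apply Real.continuous_exp.comp
  apply Continuous.mul continuous_const
  simp only [dotProduct, Matrix.mulVec]
  exact continuous_finset_sum _ fun k _ => by
    apply Continuous.mul (by fun_prop)
    exact continuous_finset_sum _ fun l _ => by fun_prop

lemma gaussianPdf_measurable (n : ℕ) (μ : Fin n → ℝ) (S : Matrix (Fin n) (Fin n) ℝ) :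
    Measurable (gaussianPdf n μ S) := (gaussianPdf_continuous n μ S).measurable

lemma gaussianPdf_cov (n : ℕ) (μ0 μf h : Fin n → ℝ)
    (H S0 Sf : Matrix (Fin n) (Fin n) ℝ)
    (hH : IsUnit H.det) (hS0 : S0.PosDef)
    (hμf : H.mulVec μ0 - h = μf) (hSf : H * S0 * Hᵀ = Sf) (y : Fin n → ℝ) :
    gaussianPdf n μf Sf y = |H.det|⁻¹ * gaussianPdf n μ0 S0 (H⁻¹.mulVec (y + h)) := by
  have hdetH : H.det ≠ 0 := hH.ne_zero
  have hx : H⁻¹.mulVec (y + h) - μ0 = H⁻¹.mulVec (y - μf) := by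
    have : μ0 = H⁻¹.mulVec (H.mulVec μ0) := by
      rw [Matrix.mulVec_mulVec, Matrix.nonsing_inv_mul H hH, Matrix.one_mulVec]
    rw [this, ← Matrix.mulVec_sub, ← hμf]
    congr 1
    abel
  have hquad : (y - μf) ⬝ᵥ Sf⁻¹.mulVec (y - μf) =
      (H⁻¹.mulVec (y - μf)) ⬝ᵥ S0⁻¹.mulVec (H⁻¹.mulVec (y - μf)) := by
    set d := y - μf
    have hSfinv : Sf⁻¹ = (H⁻¹)ᵀ * (S0⁻¹ * H⁻¹) := by
      rw [← hSf, Matrix.mul_inv_rev, Matrix.mul_inv_rev, Matrix.transpose_nonsing_inv]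
    rw [hSfinv, ← Matrix.mulVec_mulVec, Matrix.dotProduct_mulVec, Matrix.vecMul_transpose,
      Matrix.mulVec_mulVec]
  have hdet : Sf.det ^ (-(1 : ℝ) / 2) = |H.det|⁻¹ * S0.det ^ (-(1 : ℝ) / 2) := by
    have h1 : Sf.det = |H.det| ^ (2 : ℕ) * S0.det := by
      rw [← hSf, Matrix.det_mul, Matrix.det_mul, Matrix.det_transpose, sq_abs]
      ring
    rw [h1, Real.mul_rpow (by positivity) hS0.det_pos.le, ← Real.rpow_natCast |H.det| 2,
      ← Real.rpow_mul (abs_nonneg _)]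
    have h2 : ((2:ℕ):ℝ) * (-(1:ℝ)/2) = -1 := by norm_num
    rw [h2, Real.rpow_neg_one]
  rw [gaussianPdf, gaussianPdf, hx, ← hquad, hdet]
  ring

lemma affine_continuous {n : ℕ} (H : Matrix (Fin n) (Fin n) ℝ) (h : Fin n → ℝ) :
    Continuous (fun x : Fin n → ℝ => H.mulVec x - h) := by
  have : Continuous (Matrix.toLin' H) := (Matrix.toLin' H).continuous_of_finiteDimensional
  exact (this.sub (continuous_const (y := h))).congr fun x => by simp [Matrix.toLin'_apply]

lemma map_volume_affine {n : ℕ} (H : Matrix (Fin n) (Fin n) ℝ) (hH : H.det ≠ 0)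
    (h : Fin n → ℝ) :
    (volume : Measure (Fin n → ℝ)).map (fun x => H.mulVec x - h) =
      ENNReal.ofReal |H.det|⁻¹ • volume := by
  have h1 : (fun x : Fin n → ℝ => H.mulVec x - h) =
      (fun y => y + (-h)) ∘ (Matrix.toLin' H) := by
    funext x; simp [Matrix.toLin'_apply, sub_eq_add_neg]
  rw [h1, ← Measure.map_map (measurable_add_const (-h))
    (Matrix.toLin' H).continuous_of_finiteDimensional.measurable,
    Real.map_matrix_volume_pi_eq_smul_volume_pi hH, Measure.map_smul,
    map_add_right_eq_self volume (-h), abs_inv]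

lemma setLIntegral_affine {n : ℕ} (H : Matrix (Fin n) (Fin n) ℝ) (hH : H.det ≠ 0)
    (h : Fin n → ℝ) (g0 : (Fin n → ℝ) → ℝ) (hg0 : Measurable g0)
    {A : Set (Fin n → ℝ)} (hA : MeasurableSet A) :
    ∫⁻ x in (fun x => H.mulVec x - h) ⁻¹' A, ENNReal.ofReal (g0 x) =
      ENNReal.ofReal |H.det|⁻¹ * ∫⁻ y in A, ENNReal.ofReal (g0 (H⁻¹.mulVec (y + h))) := by
  have hTmeas : Measurable (fun x : Fin n → ℝ => H.mulVec x - h) :=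
    (affine_continuous H h).measurable
  have haff : Continuous (fun y : Fin n → ℝ => H⁻¹.mulVec (y + h)) := by
    have := affine_continuous H⁻¹ (-(H⁻¹.mulVec h))
    simpa [Matrix.mulVec_add, sub_neg_eq_add] using this
  have hGmeas : Measurable fun y : Fin n → ℝ => ENNReal.ofReal (g0 (H⁻¹.mulVec (y + h))) :=
    (hg0.comp haff.measurable).ennreal_ofReal
  have hinvT : ∀ x : Fin n → ℝ, H⁻¹.mulVec ((H.mulVec x - h) + h) = x := by
    intro x
    simp [sub_add_cancel, Matrix.mulVec_mulVec,
      Matrix.nonsing_inv_mul H (isUnit_iff_ne_zero.mpr hH), Matrix.one_mulVec]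
  calc ∫⁻ x in (fun x => H.mulVec x - h) ⁻¹' A, ENNReal.ofReal (g0 x)
      = ∫⁻ x in (fun x => H.mulVec x - h) ⁻¹' A,
          (fun y => ENNReal.ofReal (g0 (H⁻¹.mulVec (y + h)))) ((fun x => H.mulVec x - h) x) := by
        apply lintegral_congr; intro x
        show ENNReal.ofReal (g0 x) = ENNReal.ofReal (g0 (H⁻¹.mulVec ((H.mulVec x - h) + h)))
        rw [hinvT x]
    _ = ∫⁻ y in A, ENNReal.ofReal (g0 (H⁻¹.mulVec (y + h)))
          ∂((volume : Measure (Fin n → ℝ)).map (fun x => H.mulVec x - h)) :=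
        (setLIntegral_map hA hGmeas hTmeas).symm
    _ = ENNReal.ofReal |H.det|⁻¹ * ∫⁻ y in A, ENNReal.ofReal (g0 (H⁻¹.mulVec (y + h))) := by
        rw [map_volume_affine H hH h, Measure.restrict_smul, lintegral_smul_measure, smul_eq_mul]

theorem gmm_steering_terminal_distribution (n r t : ℕ)
    {Om : Type*} [MeasurableSpace Om] (P : Measure Om) [IsProbabilityMeasure P]
    (p : Fin r → ℝ) (hp_pos : ∀ i, 0 < p i) (hp_sum : ∑ i, p i = 1)
    (μ0 : Fin r → (Fin n → ℝ)) (S0 : Fin r → Matrix (Fin n) (Fin n) ℝ)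
    (hS0 : ∀ i, (S0 i).PosDef)
    (lam : Fin r → Fin t → ℝ) (hlam_nonneg : ∀ i j, 0 ≤ lam i j)
    (hlam_sum : ∀ i, ∑ j, lam i j = 1)
    (H : Fin r → Fin t → Matrix (Fin n) (Fin n) ℝ)
    (hHinv : ∀ i j, IsUnit (H i j).det)
    (h : Fin r → Fin t → (Fin n → ℝ))
    (μf : Fin t → (Fin n → ℝ)) (Sf : Fin t → Matrix (Fin n) (Fin n) ℝ)
    (hμf : ∀ i j, (H i j).mulVec (μ0 i) - h i j = μf j)
    (hSf : ∀ i j, H i j * S0 i * (H i j)ᵀ = Sf j)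
    (I : Om → Fin r) (J : Om → Fin t) (x0 : Om → (Fin n → ℝ))
    (hx0 : Measurable x0) (hI : Measurable I) (hJ : Measurable J)
    (hjoint : ∀ (i : Fin r) (j : Fin t) (A : Set (Fin n → ℝ)), MeasurableSet A →
      P {ω | I ω = i ∧ J ω = j ∧ x0 ω ∈ A} =
        ENNReal.ofReal (p i * lam i j) *
          ∫⁻ x in A, ENNReal.ofReal (gaussianPdf n (μ0 i) (S0 i) x))
    (xN : Om → (Fin n → ℝ))
    (hxN : ∀ ω, xN ω = (H (I ω) (J ω)).mulVec (x0 ω) - h (I ω) (J ω)) :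
    P.map xN = volume.withDensity (fun x => ENNReal.ofReal
      (∑ j, (∑ i, p i * lam i j) * gaussianPdf n (μf j) (Sf j) x)) := by
  classical
  -- r is nonempty
  have hr : Nonempty (Fin r) := by
    by_contra hc
    rw [not_nonempty_iff] at hc
    simp [Finset.sum_of_isEmpty] at hp_sum
  obtain ⟨i0⟩ := hr
  have hdetSf : ∀ j, 0 ≤ (Sf j).det := by
    intro j
    rw [← hSf i0 j, Matrix.det_mul, Matrix.det_mul, Matrix.det_transpose]
    have := (hS0 i0).det_pos
    nlinarith [sq_nonneg ((H i0 j).det), (hS0 i0).det_pos]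
  -- measurability of xN
  have hxNmeas : Measurable xN := by
    have : xN = fun ω => (H (I ω) (J ω)).mulVec (x0 ω) - h (I ω) (J ω) := funext hxN
    rw [this]
    apply measurable_pi_lambda
    intro a
    apply Measurable.sub
    · simp only [Matrix.mulVec, dotProduct]
      apply Finset.measurable_sum
      intro k _
      exact ((measurable_of_finite (fun q : Fin r × Fin t => H q.1 q.2 a k)).comp
        (hI.prodMk hJ)).mul ((measurable_pi_apply k).comp hx0)
    · exact (measurable_of_finite (fun q : Fin r × Fin t => h q.1 q.2 a)).comp
        (hI.prodMk hJ)
  ext A hA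
  rw [Measure.map_apply hxNmeas hA, withDensity_apply _ hA]
  -- decompose the event by (I, J)
  set T : Fin r → Fin t → (Fin n → ℝ) → (Fin n → ℝ) :=
    fun i j x => (H i j).mulVec x - h i j with hT
  set S : Fin r × Fin t → Set Om :=
    fun q => {ω | I ω = q.1 ∧ J ω = q.2 ∧ x0 ω ∈ T q.1 q.2 ⁻¹' A} with hS
  have hTmeas : ∀ i j, Measurable (T i j) := fun i j => (affine_continuous _ _).measurable
  have hSmeas : ∀ q, MeasurableSet (S q) := by
    intro q
    exact ((hI (measurableSet_singleton q.1)).inter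
      ((hJ (measurableSet_singleton q.2)).inter (hx0 ((hTmeas q.1 q.2) hA))))
  have hcover : xN ⁻¹' A = ⋃ q, S q := by
    ext ω
    simp only [Set.mem_preimage, Set.mem_iUnion, hS, Set.mem_setOf_eq]
    constructor
    · intro hω
      exact ⟨(I ω, J ω), rfl, rfl, by simpa [hT, ← hxN ω] using hω⟩
    · rintro ⟨q, h1, h2, h3⟩
      have : xN ω = T q.1 q.2 (x0 ω) := by rw [hxN ω, h1, h2]
      rw [← this] at h3
      exact h3
  have hdisj : Pairwise (Function.onFun Disjoint S) := by
    intro q q' hne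
    rw [Function.onFun, Set.disjoint_left]
    rintro ω ⟨h1, h2, _⟩ ⟨h1', h2', _⟩
    exact hne (Prod.ext (h1 ▸ h1') (h2 ▸ h2'))
  rw [hcover, measure_iUnion hdisj hSmeas, tsum_fintype]
  -- compute each piece
  have hpiece : ∀ q : Fin r × Fin t, P (S q) =
      ENNReal.ofReal (p q.1 * lam q.1 q.2) *
        ∫⁻ y in A, ENNReal.ofReal (gaussianPdf n (μf q.2) (Sf q.2) y) := by
    rintro ⟨i, j⟩
    have h1 : P (S (i, j)) = ENNReal.ofReal (p i * lam i j) *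
        ∫⁻ x in T i j ⁻¹' A, ENNReal.ofReal (gaussianPdf n (μ0 i) (S0 i) x) :=
      hjoint i j _ ((hTmeas i j) hA)
    rw [h1, setLIntegral_affine (H i j) (hHinv i j).ne_zero (h i j) _
      (gaussianPdf_measurable n (μ0 i) (S0 i)) hA]
    congr 1
    have hmm : Measurable fun y : Fin n → ℝ =>
        ENNReal.ofReal (gaussianPdf n (μ0 i) (S0 i) ((H i j)⁻¹.mulVec (y + h i j))) := by
      apply Measurable.ennreal_ofReal
      exact (gaussianPdf_measurable n (μ0 i) (S0 i)).comp
        (by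
          have := affine_continuous (H i j)⁻¹ (-(((H i j)⁻¹).mulVec (h i j)))
          simpa [Matrix.mulVec_add, sub_neg_eq_add] using this.measurable)
    rw [← lintegral_const_mul _ hmm]
    apply lintegral_congr
    intro y
    rw [gaussianPdf_cov n (μ0 i) (μf j) (h i j) (H i j) (S0 i) (Sf j) (hHinv i j)
      (hS0 i) (hμf i j) (hSf i j) y, ENNReal.ofReal_mul (by positivity)]
  -- now both sides
  have hrhs : ∫⁻ y in A, ENNReal.ofReal
      (∑ j, (∑ i, p i * lam i j) * gaussianPdf n (μf j) (Sf j) y) =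
      ∑ j, ENNReal.ofReal (∑ i, p i * lam i j) *
        ∫⁻ y in A, ENNReal.ofReal (gaussianPdf n (μf j) (Sf j) y) := by
    have hterm : ∀ (j : Fin t) (y : Fin n → ℝ),
        0 ≤ (∑ i, p i * lam i j) * gaussianPdf n (μf j) (Sf j) y := by
      intro j y
      apply mul_nonneg
      · exact Finset.sum_nonneg fun i _ => mul_nonneg (hp_pos i).le (hlam_nonneg i j)
      · exact gaussianPdf_nonneg n _ _ (hdetSf j) y
    calc (∫⁻ y in A, ENNReal.ofReal (∑ j, (∑ i, p i * lam i j) * gaussianPdf n (μf j) (Sf j) y))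
        = ∫⁻ y in A, ∑ j, ENNReal.ofReal ((∑ i, p i * lam i j) * gaussianPdf n (μf j) (Sf j) y) := by
          apply lintegral_congr; intro y
          rw [ENNReal.ofReal_sum_of_nonneg fun j _ => hterm j y]
      _ = ∑ j, ∫⁻ y in A, ENNReal.ofReal ((∑ i, p i * lam i j) * gaussianPdf n (μf j) (Sf j) y) := by
          apply lintegral_finset_sum
          intro j _
          exact (measurable_const.mul (gaussianPdf_measurable n (μf j) (Sf j))).ennreal_ofReal
      _ = ∑ j, ENNReal.ofReal (∑ i, p i * lam i j) *
            ∫⁻ y in A, ENNReal.ofReal (gaussianPdf n (μf j) (Sf j) y) := by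
          apply Finset.sum_congr rfl
          intro j _
          rw [← lintegral_const_mul _ (gaussianPdf_measurable n (μf j) (Sf j)).ennreal_ofReal]
          apply lintegral_congr
          intro y
          rw [ENNReal.ofReal_mul (Finset.sum_nonneg fun i _ =>
            mul_nonneg (hp_pos i).le (hlam_nonneg i j))]
  rw [hrhs]
  simp only [hpiece]
  rw [Fintype.sum_prod_type_right]
  apply Finset.sum_congr rfl
  intro j _
  rw [ENNReal.ofReal_sum_of_nonneg fun i _ => mul_nonneg (hp_pos i).le (hlam_nonneg i j),
    Finset.sum_mul]
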